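/- Let p ∈ (1,2), ε > 0, and k > 0. Define Ψ(k,p,ε) = (1+ε)² + 1 - (1+ε) · [(1 + k² + (1+ε)²k²)(2(p-1)(1+ε)k² + (2-p)(1+(1+ε)²k²))] / [(1+(1+ε)²k²)(1 + (1+ε)²k² + (p-1)k²)]. Then Ψ(k,p,ε) ≥ ε(2+2ε+ε²)/(1+ε) > 0. -/

import Mathlib

/-- The rational function `Ψ(k,p,ε)` appearing in the proof of Proposition 3.1. -/
noncomputable def Psi (k p ε : ℝ) : ℝ :=
  (1 + ε) ^ 2 + 1 - (1 + ε) *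
    ((1 + k ^ 2 + (1 + ε) ^ 2 * k ^ 2) *
      (2 * (p - 1) * (1 + ε) * k ^ 2 + (2 - p) * (1 + (1 + ε) ^ 2 * k ^ 2))) /
    ((1 + (1 + ε) ^ 2 * k ^ 2) * (1 + (1 + ε) ^ 2 * k ^ 2 + (p - 1) * k ^ 2))

/-- For `p ∈ (1,2)`, `ε > 0`, `k > 0`, one has
`Ψ(k,p,ε) ≥ ε(2+2ε+ε²)/(1+ε) > 0`. -/
theorem stmt3 (p ε k : ℝ) (hp1 : 1 < p) (hp2 : p < 2) (hε : 0 < ε) (hk : 0 < k) :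
    ε * (2 + 2 * ε + ε ^ 2) / (1 + ε) ≤ Psi k p ε ∧
      0 < ε * (2 + 2 * ε + ε ^ 2) / (1 + ε) := by
  have h1e : (0:ℝ) < 1 + ε := by linarith
  have hA : (0:ℝ) < 1 + (1 + ε) ^ 2 * k ^ 2 := by positivity
  have hB : (0:ℝ) < 1 + (1 + ε) ^ 2 * k ^ 2 + (p - 1) * k ^ 2 := by
    have : 0 ≤ (p - 1) * k ^ 2 := mul_nonneg (by linarith) (sq_nonneg k)
    linarith
  set S : ℝ := 1 + 3*k^2 + 2*ε + 6*ε*k^2 + ε^2 + 8*ε^2*k^2 + 2*ε^2*k^4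
      + 6*ε^3*k^2 + 6*ε^3*k^4 + 2*ε^4*k^2 + 7*ε^4*k^4 + 4*ε^5*k^4 + ε^6*k^4 with hS
  set R : ℝ := 1 + k^2 + 2*ε*k^2 + ε^2*k^2 with hR
  have hQ : (0:ℝ) < (p - 1) * S + R := by
    have h1 : 0 < (p - 1) * S :=
      mul_pos (by linarith) (by rw [hS]; positivity)
    have h2 : (0:ℝ) < R := by rw [hR]; positivity
    linarith
  have key : Psi k p ε - ε * (2 + 2 * ε + ε ^ 2) / (1 + ε)
      = ((p - 1) * S + R) /
        ((1 + (1 + ε) ^ 2 * k ^ 2) * (1 + (1 + ε) ^ 2 * k ^ 2 + (p - 1) * k ^ 2) * (1 + ε)) := by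
    rw [Psi, hS, hR]
    rw [sub_div' (hc := (mul_pos hA hB).ne'), div_sub_div _ _ (mul_pos hA hB).ne' h1e.ne', div_eq_div_iff (by positivity) (by positivity)]
    ring
  have hden : (0:ℝ) < (1 + (1 + ε) ^ 2 * k ^ 2) * (1 + (1 + ε) ^ 2 * k ^ 2 + (p - 1) * k ^ 2) * (1 + ε) :=
    by positivity
  have hpos : 0 ≤ Psi k p ε - ε * (2 + 2 * ε + ε ^ 2) / (1 + ε) := by
    rw [key]; exact div_nonneg hQ.le hden.le
  exact ⟨by linarith, by positivity⟩
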